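/- Let ρ be a density operator on H ⊗ H', T an operator on H with ‖T‖ ≤ c for a constant c, and R a reflection on H. Suppose there is a reflection S on H' that is ε-consistent with R on ρ, meaning (1 + tr((R⊗S)ρ))/2 ≥ 1 − ε. Then |tr(RTRρ) − tr(Tρ)| ≤ O(c·sqrt(ε)). -/

import Mathlib

open Matrix
open scoped ComplexOrder Kronecker


private lemma starMulSelf' (z : ℂ) : star z * z = (‖z‖^2 : ℝ) := by
  rw [Complex.star_def, Complex.conj_mul']
  push_cast; ring

private lemma traceForm' {ι κ : Type*} [Fintype ι] [Fintype κ] (X : Matrix ι κ ℂ) :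
    (Xᴴ * X).trace = ((∑ j, ∑ i, ‖X i j‖^2 : ℝ) : ℂ) := by
  simp only [Matrix.trace, Matrix.diag, Matrix.mul_apply, conjTranspose_apply, starMulSelf']
  norm_cast

private lemma traceFormNonneg' {ι κ : Type*} [Fintype ι] [Fintype κ] (X : Matrix ι κ ℂ) :
    0 ≤ ((Xᴴ * X).trace).re := by
  rw [traceForm', Complex.ofReal_re]
  positivity

private lemma traceCS' {ι κ : Type*} [Fintype ι] [Fintype κ] (X Y : Matrix ι κ ℂ) :
    ‖(Xᴴ * Y).trace‖
      ≤ Real.sqrt (((Xᴴ * X).trace).re) * Real.sqrt (((Yᴴ * Y).trace).re) := by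
  classical
  let u : EuclideanSpace ℂ (κ × ι) := WithLp.toLp 2 (fun p => X p.2 p.1)
  let v : EuclideanSpace ℂ (κ × ι) := WithLp.toLp 2 (fun p => Y p.2 p.1)
  have htr : (Xᴴ * Y).trace = inner ℂ u v := by
    simp only [Matrix.trace, Matrix.diag, Matrix.mul_apply, conjTranspose_apply,
      PiLp.inner_apply, RCLike.inner_apply]
    rw [← Finset.sum_product', Finset.univ_product_univ]
    exact Finset.sum_congr rfl fun _ _ => mul_comm _ _
  have hX : Real.sqrt (((Xᴴ * X).trace).re) = ‖u‖ := by
    rw [traceForm', Complex.ofReal_re, EuclideanSpace.norm_eq]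
    congr 1
    rw [← Finset.sum_product', Finset.univ_product_univ]
  have hY : Real.sqrt (((Yᴴ * Y).trace).re) = ‖v‖ := by
    rw [traceForm', Complex.ofReal_re, EuclideanSpace.norm_eq]
    congr 1
    rw [← Finset.sum_product', Finset.univ_product_univ]
  rw [htr, hX, hY]
  exact norm_inner_le_norm u v

private lemma dotSelf' (ι : Type*) [Fintype ι] (v : ι → ℂ) :
    star v ⬝ᵥ v = ((‖(WithLp.equiv 2 (ι → ℂ)).symm v‖^2 : ℝ) : ℂ) := by
  rw [EuclideanSpace.norm_eq, Real.sq_sqrt (by positivity)]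
  simp only [dotProduct, Pi.star_apply, starMulSelf']
  push_cast
  rfl

private lemma opNormPSD' {k : ℕ} (T : Matrix (Fin k) (Fin k) ℂ) {c : ℝ}
    (h : ‖(Matrix.toEuclideanCLM (𝕜 := ℂ) T :
        EuclideanSpace ℂ (Fin k) →L[ℂ] EuclideanSpace ℂ (Fin k))‖ ≤ c) :
    PosSemidef (((c:ℂ)^2) • 1 - Tᴴ * T) := by
  refine posSemidef_iff_dotProduct_mulVec.mpr ⟨?_, ?_⟩
  · show _ᴴ = _
    rw [conjTranspose_sub, conjTranspose_smul, conjTranspose_one, conjTranspose_mul,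
      conjTranspose_conjTranspose]
    norm_num
  · intro x
    have hle : ‖(WithLp.equiv 2 (Fin k → ℂ)).symm (T *ᵥ x)‖
        ≤ c * ‖(WithLp.equiv 2 (Fin k → ℂ)).symm x‖ := by
      rw [show (WithLp.equiv 2 (Fin k → ℂ)).symm (T *ᵥ x)
        = (Matrix.toEuclideanCLM (𝕜 := ℂ) T) ((WithLp.equiv 2 (Fin k → ℂ)).symm x) from rfl]
      calc ‖(Matrix.toEuclideanCLM (𝕜 := ℂ) T) ((WithLp.equiv 2 (Fin k → ℂ)).symm x)‖
          ≤ ‖(Matrix.toEuclideanCLM (𝕜 := ℂ) T :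
              EuclideanSpace ℂ (Fin k) →L[ℂ] EuclideanSpace ℂ (Fin k))‖
            * ‖(WithLp.equiv 2 (Fin k → ℂ)).symm x‖ := ContinuousLinearMap.le_opNorm _ _
        _ ≤ c * ‖(WithLp.equiv 2 (Fin k → ℂ)).symm x‖ :=
            mul_le_mul_of_nonneg_right h (norm_nonneg _)
    have hx : star x ⬝ᵥ ((((c:ℂ)^2) • 1 - Tᴴ * T) *ᵥ x)
        = ((c^2 * ‖(WithLp.equiv 2 (Fin k → ℂ)).symm x‖^2
            - ‖(WithLp.equiv 2 (Fin k → ℂ)).symm (T *ᵥ x)‖^2 : ℝ) : ℂ) := by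
      rw [sub_mulVec, dotProduct_sub, smul_mulVec, one_mulVec, dotProduct_smul,
        ← mulVec_mulVec, dotProduct_mulVec, ← star_mulVec]
      rw [dotSelf' _ x, dotSelf' _ (T *ᵥ x)]
      rw [smul_eq_mul]; push_cast; ring
    rw [hx]
    rw [Complex.zero_le_real]
    nlinarith [norm_nonneg ((WithLp.equiv 2 (Fin k → ℂ)).symm x),
      norm_nonneg ((WithLp.equiv 2 (Fin k → ℂ)).symm (T *ᵥ x)),
      (norm_nonneg ((Matrix.toEuclideanCLM (𝕜 := ℂ) T :
        EuclideanSpace ℂ (Fin k) →L[ℂ] EuclideanSpace ℂ (Fin k)))).trans h]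

private lemma kronT' {ι κ : Type*} (A : Matrix ι ι ℂ) (B : Matrix κ κ ℂ) :
    (A ⊗ₖ B)ᴴ = Aᴴ ⊗ₖ Bᴴ := by
  ext ⟨i,j⟩ ⟨k,l⟩
  simp [conjTranspose_apply, kroneckerMap_apply, mul_comm]

private lemma subKron' {ι κ : Type*} (A B : Matrix ι ι ℂ) (C : Matrix κ κ ℂ) :
    (A - B) ⊗ₖ C = A ⊗ₖ C - B ⊗ₖ C := by
  ext ⟨i,j⟩ ⟨k,l⟩
  simp [kroneckerMap_apply, sub_mul]

section
open scoped MatrixOrder in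
private lemma psdSqrtEx' {ι : Type*} [Fintype ι] [DecidableEq ι] {P : Matrix ι ι ℂ}
    (hP : P.PosSemidef) : ∃ X : Matrix ι ι ℂ, Xᴴ = X ∧ X * X = P :=
  ⟨CFC.sqrt P, (CFC.sqrt_nonneg P).posSemidef.1, CFC.sqrt_mul_sqrt_self P hP.nonneg⟩
end

private lemma psdKronOne' {ι κ : Type*} [Fintype ι] [Fintype κ] [DecidableEq ι] [DecidableEq κ]
    {D : Matrix ι ι ℂ} (hD : D.PosSemidef) : (D ⊗ₖ (1 : Matrix κ κ ℂ)).PosSemidef := by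
  obtain ⟨Ds, hDsH, hDs⟩ := psdSqrtEx' hD
  have h := posSemidef_conjTranspose_mul_self (Ds ⊗ₖ (1 : Matrix κ κ ℂ))
  rwa [kronT', conjTranspose_one, ← mul_kronecker_mul, one_mul, hDsH,
    hDs] at h

set_option maxHeartbeats 1000000 in
set_option synthInstance.maxHeartbeats 1000000 in
/-- there is an absolute constant `K` such that for every state
`ρ` on `H ⊗ H'`, every operator `T` on `H` with operator norm at most `c`, and
every reflection `R` on `H` admitting an `ε`-consistent reflection `S` on `H'`
(i.e. `(1 + tr((R⊗S)ρ))/2 ≥ 1 − ε`), one has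
`|tr(R T R ρ) − tr(T ρ)| ≤ K c √ε`. -/
theorem stmt_12 :
    ∃ K : ℝ, 0 < K ∧
      ∀ (n m : ℕ) (ρ : Matrix (Fin n × Fin m) (Fin n × Fin m) ℂ)
        (T R : Matrix (Fin n) (Fin n) ℂ) (S : Matrix (Fin m) (Fin m) ℂ) (c ε : ℝ),
        ρ.PosSemidef → ρ.trace = 1 →
        Rᴴ = R → R * R = 1 → Sᴴ = S → S * S = 1 →
        ‖(Matrix.toEuclideanCLM (𝕜 := ℂ) T :
            EuclideanSpace ℂ (Fin n) →L[ℂ] EuclideanSpace ℂ (Fin n))‖ ≤ c →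
        0 ≤ ε →
        (1 + (((R ⊗ₖ S) * ρ).trace).re) / 2 ≥ 1 - ε →
        ‖(((R * T * R) ⊗ₖ (1 : Matrix (Fin m) (Fin m) ℂ)) * ρ).trace
            - ((T ⊗ₖ (1 : Matrix (Fin m) (Fin m) ℂ)) * ρ).trace‖
          ≤ K * c * Real.sqrt ε := by
  refine ⟨8, by norm_num, ?_⟩
  intro n m ρ T R S c ε hρ hρtr hRH hR2 hSH hS2 hT hε hcons
  have hc0 : 0 ≤ c := le_trans (norm_nonneg _) hT
  set A : Matrix (Fin n × Fin m) (Fin n × Fin m) ℂ := R ⊗ₖ S with hAdef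
  set B : Matrix (Fin n × Fin m) (Fin n × Fin m) ℂ := T ⊗ₖ (1 : Matrix (Fin m) (Fin m) ℂ)
    with hBdef
  have hAH : Aᴴ = A := by rw [hAdef, kronT', hRH, hSH]
  have hA2 : A * A = 1 := by rw [hAdef, ← mul_kronecker_mul, hR2, hS2, one_kronecker_one]
  set Q : Matrix (Fin n × Fin m) (Fin n × Fin m) ℂ := (2:ℂ)⁻¹ • (1 - A) with hQdef
  have h2Q : (2:ℂ) • Q = 1 - A := by rw [hQdef, smul_smul]; norm_num
  have hQH : Qᴴ = Q := by
    rw [hQdef, conjTranspose_smul, conjTranspose_sub, conjTranspose_one, hAH]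
    norm_num
  have hsq : (1 - A) * (1 - A) = (2:ℂ) • (1 - A) := by
    have h : (1 - A) * (1 - A) = 1 - A - A + A * A := by noncomm_ring
    rw [h, hA2]
    module
  have hQidem : Q * Q = Q := by
    rw [hQdef, smul_mul_assoc, mul_smul_comm, hsq, smul_smul, smul_smul]
    norm_num
  have hQpsd : Q.PosSemidef := by
    have h := posSemidef_conjTranspose_mul_self Q
    rwa [hQH, hQidem] at h
  -- square root of ρ
  obtain ⟨M, hMH, hM⟩ := psdSqrtEx' hρ
  -- monotonicity: PSD against ρ has nonnegative trace
  have mono : ∀ P : Matrix (Fin n × Fin m) (Fin n × Fin m) ℂ, P.PosSemidef →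
      0 ≤ ((P * ρ).trace).re := by
    intro P hP
    obtain ⟨Ps, hPsH, hPs⟩ := psdSqrtEx' hP
    have e : (P * ρ).trace = ((Ps * M)ᴴ * (Ps * M)).trace := by
      rw [conjTranspose_mul, hMH, hPsH, ← hM,
        show M * Ps * (Ps * M) = M * (Ps * Ps * M) by noncomm_ring,
        hPs, trace_mul_comm M, show P * M * M = P * (M * M) by noncomm_ring]
    rw [e]; exact traceFormNonneg' _
  -- key Cauchy-Schwarz estimate
  have key : ∀ X Y : Matrix (Fin n × Fin m) (Fin n × Fin m) ℂ,
      ‖((X * Y) * ρ).trace‖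
        ≤ Real.sqrt (((X * Xᴴ * ρ).trace).re) * Real.sqrt (((Yᴴ * Y * ρ).trace).re) := by
    intro X Y
    have e1 : (X * Y * ρ).trace = ((Xᴴ * M)ᴴ * (Y * M)).trace := by
      rw [conjTranspose_mul, conjTranspose_conjTranspose, hMH, ← hM,
        show M * X * (Y * M) = M * (X * Y * M) by noncomm_ring,
        trace_mul_comm M, show X * Y * M * M = X * Y * (M * M) by noncomm_ring]
    have f1 : ((Xᴴ * M)ᴴ * (Xᴴ * M)).trace = (X * Xᴴ * ρ).trace := by
      rw [conjTranspose_mul, conjTranspose_conjTranspose, hMH, ← hM,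
        show M * X * (Xᴴ * M) = M * (X * Xᴴ * M) by noncomm_ring,
        trace_mul_comm M, show X * Xᴴ * M * M = X * Xᴴ * (M * M) by noncomm_ring]
    have f2 : ((Y * M)ᴴ * (Y * M)).trace = (Yᴴ * Y * ρ).trace := by
      rw [conjTranspose_mul, hMH, ← hM,
        show M * Yᴴ * (Y * M) = M * (Yᴴ * Y * M) by noncomm_ring,
        trace_mul_comm M, show Yᴴ * Y * M * M = Yᴴ * Y * (M * M) by noncomm_ring]
    calc ‖(X * Y * ρ).trace‖
        = ‖((Xᴴ * M)ᴴ * (Y * M)).trace‖ := by rw [e1]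
      _ ≤ Real.sqrt ((((Xᴴ * M)ᴴ * (Xᴴ * M)).trace).re)
            * Real.sqrt ((((Y * M)ᴴ * (Y * M)).trace).re) := traceCS' _ _
      _ = Real.sqrt (((X * Xᴴ * ρ).trace).re) * Real.sqrt (((Yᴴ * Y * ρ).trace).re) := by
          rw [f1, f2]
  -- the quantity q = tr(Qρ)
  set q : ℝ := ((Q * ρ).trace).re with hqdef
  have hq0 : 0 ≤ q := mono Q hQpsd
  -- q ≤ ε
  have hqe : q ≤ ε := by
    have e : (Q * ρ).trace = 2⁻¹ * (1 - (A * ρ).trace) := by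
      rw [hQdef, smul_mul_assoc, sub_mul, one_mul, trace_smul, trace_sub, hρtr, smul_eq_mul]
    have : q = (1 - ((A * ρ).trace).re) / 2 := by
      rw [hqdef, e]
      simp [Complex.mul_re, Complex.sub_re]
      ring
    rw [this]; linarith [hcons]
  -- q ≤ 1
  have hq1 : q ≤ 1 := by
    set P : Matrix (Fin n × Fin m) (Fin n × Fin m) ℂ := (2:ℂ)⁻¹ • (1 + A) with hPdef
    have hPH : Pᴴ = P := by
      rw [hPdef, conjTranspose_smul, conjTranspose_add, conjTranspose_one, hAH]
      norm_num
    have hsq' : (1 + A) * (1 + A) = (2:ℂ) • (1 + A) := by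
      have h : (1 + A) * (1 + A) = 1 + A + A + A * A := by noncomm_ring
      rw [h, hA2]
      module
    have hPidem : P * P = P := by
      rw [hPdef, smul_mul_assoc, mul_smul_comm, hsq', smul_smul, smul_smul]
      norm_num
    have hPpsd : P.PosSemidef := by
      have h := posSemidef_conjTranspose_mul_self P
      rwa [hPH, hPidem] at h
    have hQP : Q + P = 1 := by
      rw [hQdef, hPdef]
      module
    have hsum : (Q * ρ).trace + (P * ρ).trace = 1 := by
      rw [← trace_add, ← add_mul, hQP, one_mul, hρtr]
    have := mono P hPpsd
    have : q + ((P * ρ).trace).re = 1 := by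
      rw [hqdef, ← Complex.add_re, hsum, Complex.one_re]
    linarith [mono P hPpsd]
  -- operator norm bounds
  have hBH : Bᴴ = Tᴴ ⊗ₖ (1 : Matrix (Fin m) (Fin m) ℂ) := by
    rw [hBdef, kronT', conjTranspose_one]
  have hBB : Bᴴ * B = (Tᴴ * T) ⊗ₖ (1 : Matrix (Fin m) (Fin m) ℂ) := by
    rw [hBH, hBdef, ← mul_kronecker_mul, one_mul]
  have hBBH : B * Bᴴ = (T * Tᴴ) ⊗ₖ (1 : Matrix (Fin m) (Fin m) ℂ) := by
    rw [hBH, hBdef, ← mul_kronecker_mul, one_mul]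
  have hTH : ‖(Matrix.toEuclideanCLM (𝕜 := ℂ) Tᴴ :
      EuclideanSpace ℂ (Fin n) →L[ℂ] EuclideanSpace ℂ (Fin n))‖ ≤ c := by
    rw [← Matrix.star_eq_conjTranspose, map_star, ContinuousLinearMap.star_eq_adjoint]
    exact le_trans (le_of_eq (ContinuousLinearMap.adjoint.norm_map _)) hT
  have hTpsd := opNormPSD' T hT
  have hTpsd' : PosSemidef (((c:ℂ)^2) • 1 - T * Tᴴ) := by
    have h := opNormPSD' Tᴴ hTH
    rwa [conjTranspose_conjTranspose] at h
  have hBpsd : PosSemidef (((c:ℂ)^2) • (1 : Matrix (Fin n × Fin m) (Fin n × Fin m) ℂ)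
      - Bᴴ * B) := by
    have h := psdKronOne' (κ := Fin m) hTpsd
    rwa [subKron', smul_kronecker, one_kronecker_one, ← hBB] at h
  have hBpsd' : PosSemidef (((c:ℂ)^2) • (1 : Matrix (Fin n × Fin m) (Fin n × Fin m) ℂ)
      - B * Bᴴ) := by
    have h := psdKronOne' (κ := Fin m) hTpsd'
    rwa [subKron', smul_kronecker, one_kronecker_one, ← hBBH] at h
  -- trace bounds from PSD
  have smul_trace_re : ∀ Z : Matrix (Fin n × Fin m) (Fin n × Fin m) ℂ,
      (((((c:ℂ)^2) • (1 : Matrix (Fin n × Fin m) (Fin n × Fin m) ℂ) - Z) * ρ).trace).re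
        = c^2 - ((Z * ρ).trace).re := by
    intro Z
    rw [sub_mul, smul_mul_assoc, one_mul, trace_sub, trace_smul, hρtr, smul_eq_mul, mul_one,
      Complex.sub_re]
    norm_cast
  have hBBle : ((Bᴴ * B * ρ).trace).re ≤ c^2 := by
    have h := mono _ hBpsd
    rw [smul_trace_re] at h
    linarith
  have hBBHle : ((B * Bᴴ * ρ).trace).re ≤ c^2 := by
    have h := mono _ hBpsd'
    rw [smul_trace_re] at h
    linarith
  have hQBQle : (((B * Q)ᴴ * (B * Q) * ρ).trace).re ≤ c^2 * q := by
    have hQDQ := hBpsd.mul_mul_conjTranspose_same Q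
    have e : Q * (((c:ℂ)^2) • (1 : Matrix (Fin n × Fin m) (Fin n × Fin m) ℂ) - Bᴴ * B) * Qᴴ
        = ((c:ℂ)^2) • Q - (B * Q)ᴴ * (B * Q) := by
      rw [hQH, conjTranspose_mul, hQH]
      simp only [mul_sub, sub_mul, mul_smul_comm, smul_mul_assoc, Matrix.mul_one, mul_assoc,
        hQidem]
    rw [e] at hQDQ
    have h := mono _ hQDQ
    have e2 : ((((c:ℂ)^2) • Q - (B * Q)ᴴ * (B * Q)) * ρ).trace
        = ((c:ℂ)^2) * (Q * ρ).trace - ((B * Q)ᴴ * (B * Q) * ρ).trace := by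
      rw [sub_mul, smul_mul_assoc, trace_sub, trace_smul, smul_eq_mul,
        show (B * Q)ᴴ * (B * Q) * ρ = (B * Q)ᴴ * (B * Q) * ρ from rfl]
    rw [e2, Complex.sub_re] at h
    have e3 : (((c:ℂ)^2) * (Q * ρ).trace).re = c^2 * q := by
      rw [hqdef, show ((c:ℂ)^2) = ((c^2 : ℝ) : ℂ) by push_cast; ring, Complex.re_ofReal_mul]
    rw [e3] at h
    linarith
  -- main algebraic identity
  have habab : (R * T * R) ⊗ₖ (1 : Matrix (Fin m) (Fin m) ℂ) = A * B * A := by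
    rw [hAdef, hBdef, ← mul_kronecker_mul, ← mul_kronecker_mul, Matrix.mul_one, hS2]
  have hdiff : A * B * A - B
      = (4:ℂ) • (Q * (B * Q)) - (2:ℂ) • (Q * B) - (2:ℂ) • (B * Q) := by
    have h1 : A * B * A - B = (1 - A) * B * (1 - A) - (1 - A) * B - B * (1 - A) := by
      noncomm_ring
    rw [h1, ← h2Q]
    simp only [smul_mul_assoc, mul_smul_comm, smul_smul, mul_assoc]
    norm_num
  set t1 : ℂ := ((Q * (B * Q)) * ρ).trace with ht1def
  set t2 : ℂ := ((Q * B) * ρ).trace with ht2def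
  set t3 : ℂ := ((B * Q) * ρ).trace with ht3def
  have hsplit : (((R * T * R) ⊗ₖ (1 : Matrix (Fin m) (Fin m) ℂ)) * ρ).trace - (B * ρ).trace
      = (4:ℂ) * t1 - (2:ℂ) * t2 - (2:ℂ) * t3 := by
    rw [habab, ← trace_sub, ← sub_mul, hdiff]
    simp only [sub_mul, smul_mul_assoc, trace_sub, trace_smul, smul_eq_mul]
    rfl
  -- bounds on the three traces
  have hsq2 : Real.sqrt (c^2) = c := Real.sqrt_sq hc0
  have hb2 : ‖t2‖ ≤ Real.sqrt q * c := by
    have h := key Q B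
    rw [hQH, hQidem] at h
    calc ‖t2‖ ≤ Real.sqrt q * Real.sqrt (((Bᴴ * B * ρ).trace).re) := h
      _ ≤ Real.sqrt q * c := by
          refine mul_le_mul_of_nonneg_left ?_ (Real.sqrt_nonneg _)
          rw [← hsq2]
          exact Real.sqrt_le_sqrt hBBle
  have hb3 : ‖t3‖ ≤ c * Real.sqrt q := by
    have h := key B Q
    rw [hQH, hQidem] at h
    calc ‖t3‖ ≤ Real.sqrt (((B * Bᴴ * ρ).trace).re) * Real.sqrt q := h
      _ ≤ c * Real.sqrt q := by
          refine mul_le_mul_of_nonneg_right ?_ (Real.sqrt_nonneg _)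
          rw [← hsq2]
          exact Real.sqrt_le_sqrt hBBHle
  have hb1 : ‖t1‖ ≤ c * q := by
    have h := key Q (B * Q)
    rw [hQH, hQidem] at h
    calc ‖t1‖
        ≤ Real.sqrt q * Real.sqrt ((((B * Q)ᴴ * (B * Q) * ρ).trace).re) := h
      _ ≤ Real.sqrt q * Real.sqrt (c^2 * q) := by
          refine mul_le_mul_of_nonneg_left ?_ (Real.sqrt_nonneg _)
          exact Real.sqrt_le_sqrt hQBQle
      _ = c * q := by
          rw [Real.sqrt_mul (sq_nonneg c), hsq2, ← mul_assoc, mul_comm (Real.sqrt q) c,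
            mul_assoc, Real.mul_self_sqrt hq0]
  -- finish
  have hqs : Real.sqrt q ≤ Real.sqrt ε := Real.sqrt_le_sqrt hqe
  have hqq : q ≤ Real.sqrt ε := by
    have h1 : q ≤ Real.sqrt q := by
      nlinarith [Real.sq_sqrt hq0, Real.sqrt_nonneg q]
    linarith
  rw [hsplit]
  calc ‖(4:ℂ) * t1 - (2:ℂ) * t2 - (2:ℂ) * t3‖
      ≤ ‖(4:ℂ) * t1‖ + ‖(2:ℂ) * t2‖ + ‖(2:ℂ) * t3‖ := by
        exact le_trans (norm_sub_le _ _) (by gcongr; exact norm_sub_le _ _)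
    _ = 4 * ‖t1‖ + 2 * ‖t2‖ + 2 * ‖t3‖ := by
        simp [norm_mul]
    _ ≤ 4 * (c * q) + 2 * (Real.sqrt q * c) + 2 * (c * Real.sqrt q) := by gcongr
    _ ≤ 8 * c * Real.sqrt ε := by nlinarith [Real.sqrt_nonneg q, Real.sqrt_nonneg ε]
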